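/- For the figure-eight knot representation ρ with g1 ↦ [[m,1],[0,m^{-1}]], g2 ↦ [[m,0],[y,m^{-1}]] satisfying (y-1)(m^2+m^{-2}) + y^2 - 3y + 3 = 0, the longitude λ = g2^{-1} g1 g3^{-1} g4 with g3 = g2 g1 g2^{-1} and g4 = g3^{-1} g2 g3 is mapped to an upper-triangular matrix whose (1,1) entry is l = −m^{-2}(y−3)(y−1)^2 − m^{-4}(y^2−3y+1), and moreover ρ(λ) commutes with ρ(g1). -/
import Mathlib

open Matrix

set_option maxHeartbeats 1000000 in
theorem fig8_aux
    (y m n : ℂ) (hn : m * n = 1)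
    (hf : (y - 1) * (m ^ 2 + n ^ 2) + y ^ 2 - 3 * y + 3 = 0)
    (A B : Matrix (Fin 2) (Fin 2) ℂ)
    (hA : A = !![m, 1; 0, n]) (hB : B = !![m, 0; y, n])
    (C D L : Matrix (Fin 2) (Fin 2) ℂ)
    (hC : C = B * A * B⁻¹) (hD : D = C⁻¹ * B * C)
    (hL : L = B⁻¹ * A * C⁻¹ * D) :
    L 1 0 = 0 ∧
      L 0 0 = -n ^ 2 * (y - 3) * (y - 1) ^ 2 - n ^ 4 * (y ^ 2 - 3 * y + 1) ∧
      L * A = A * L := by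
  have hAi : A⁻¹ = !![n, -1; 0, m] := by
    rw [hA]
    refine inv_eq_left_inv ?_
    ext i j
    fin_cases i <;> fin_cases j <;>
      simp [Matrix.mul_apply, Fin.sum_univ_two, Matrix.one_apply] <;>
      (first | ring1 | linear_combination hn | linear_combination (-1 : ℂ) • hn)
  have hBi : B⁻¹ = !![n, 0; -y, m] := by
    rw [hB]
    refine inv_eq_left_inv ?_
    ext i j
    fin_cases i <;> fin_cases j <;>
      simp [Matrix.mul_apply, Fin.sum_univ_two, Matrix.one_apply] <;>
      (first | ring1 | linear_combination hn | linear_combination (-1 : ℂ) • hn)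
  have hdetB : IsUnit B.det := by
    have : B.det = 1 := by rw [hB, Matrix.det_fin_two_of]; linear_combination hn
    rw [this]; exact isUnit_one
  have hCi : C⁻¹ = B * A⁻¹ * B⁻¹ := by
    rw [hC, Matrix.mul_inv_rev, Matrix.mul_inv_rev, Matrix.nonsing_inv_nonsing_inv B hdetB,
      mul_assoc]
  rw [hL, hD, hCi, hC, hAi, hBi, hA, hB]
  refine ⟨?_, ?_, ?_⟩
  · simp only [Matrix.mul_fin_two, Matrix.cons_val', Matrix.cons_val_zero, Matrix.cons_val_one,
      Matrix.head_cons, Matrix.head_fin_const, Matrix.empty_val', Matrix.cons_val_fin_one,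
      Matrix.of_apply, Fin.mk_zero, Fin.mk_one, Fin.isValue]
    linear_combination ((-1)*m^1*y^2 + (-1)*n^1*y^2) * hf + ((1)*m^5*n^2*y^2 + (-2)*m^4*n^3*y^2 + (-1)*m^4*n^1*y^3 + (1)*m^4*n^1*y^2 + (-2)*m^3*n^4*y^2 + (2)*m^3*n^2*y^3 + (-2)*m^3*n^2*y^2 + (-1)*m^3*y^3 + (1)*m^3*y^2 + (1)*m^2*n^5*y^2 + (2)*m^2*n^3*y^3 + (-2)*m^2*n^3*y^2 + (-1)*m^2*n^1*y^4 + (2)*m^2*n^1*y^3 + (-2)*m^2*n^1*y^2 + (-1)*m^1*n^4*y^3 + (1)*m^1*n^4*y^2 + (-1)*m^1*n^2*y^4 + (2)*m^1*n^2*y^3 + (-2)*m^1*n^2*y^2 + (-1)*m^1*y^4 + (3)*m^1*y^3 + (-3)*m^1*y^2 + (-1)*n^3*y^3 + (1)*n^3*y^2 + (-1)*n^1*y^4 + (3)*n^1*y^3 + (-3)*n^1*y^2) * hn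
  · simp only [Matrix.mul_fin_two, Matrix.cons_val', Matrix.cons_val_zero, Matrix.cons_val_one,
      Matrix.head_cons, Matrix.head_fin_const, Matrix.empty_val', Matrix.cons_val_fin_one,
      Matrix.of_apply, Fin.mk_zero, Fin.mk_one, Fin.isValue]
    linear_combination ((2)*n^2*y^1 + (-1)*n^2 + (1)*y^1) * hf + ((1)*m^5*n^5 + (-1)*m^5*n^3*y^1 + (1)*m^4*n^4 + (1)*m^4*n^2*y^2 + (-1)*m^4*n^2*y^1 + (1)*m^3*n^5*y^1 + (-1)*m^3*n^3*y^2 + (1)*m^3*n^3 + (1)*m^3*n^1*y^2 + (-1)*m^3*n^1*y^1 + (-1)*m^2*n^4*y^2 + (1)*m^2*n^4*y^1 + (1)*m^2*n^2*y^3 + (-1)*m^2*n^2*y^2 + (1)*m^2*n^2 + (1)*m^2*y^2 + (-1)*m^2*y^1 + (1)*m^1*n^5*y^2 + (1)*m^1*n^3*y^3 + (-1)*m^1*n^3*y^2 + (1)*m^1*n^3*y^1 + (1)*m^1*n^1*y^3 + (-3)*m^1*n^1*y^2 + (3)*m^1*n^1*y^1 + (1)*n^4*y^2 + (1)*n^2*y^3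 + (-1)*n^2*y^2 + (1)*n^2*y^1 + (1)*y^3 + (-3)*y^2 + (3)*y^1) * hn
  · ext i j
    fin_cases i <;> fin_cases j <;>
      simp only [Matrix.mul_fin_two, Matrix.cons_val', Matrix.cons_val_zero, Matrix.cons_val_one,
      Matrix.head_cons, Matrix.head_fin_const, Matrix.empty_val', Matrix.cons_val_fin_one,
      Matrix.of_apply, Fin.mk_zero, Fin.mk_one, Fin.isValue]
    · linear_combination ((1)*m^1*y^2 + (1)*n^1*y^2) * hf + ((-1)*m^5*n^2*y^2 + (2)*m^4*n^3*y^2 + (1)*m^4*n^1*y^3 + (-1)*m^4*n^1*y^2 + (2)*m^3*n^4*y^2 + (-2)*m^3*n^2*y^3 + (2)*m^3*n^2*y^2 + (1)*m^3*y^3 + (-1)*m^3*y^2 + (-1)*m^2*n^5*y^2 + (-2)*m^2*n^3*y^3 + (2)*m^2*n^3*y^2 + (1)*m^2*n^1*y^4 + (-2)*m^2*n^1*y^3 + (2)*m^2*n^1*y^2 + (1)*m^1*n^4*y^3 + (-1)*m^1*n^4*y^2 + (1)*m^1*n^2*y^4 + (-2)*m^1*n^2*y^3 + (2)*m^1*n^2*y^2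 + (1)*m^1*y^4 + (-3)*m^1*y^3 + (3)*m^1*y^2 + (1)*n^3*y^3 + (-1)*n^3*y^2 + (1)*n^1*y^4 + (-3)*n^1*y^3 + (3)*n^1*y^2) * hn
    · linear_combination ((-1)*m^2*y^1 + (1)*n^2*y^1) * hf + ((1)*m^6*n^2*y^1 + (-3)*m^5*n^3*y^1 + (-1)*m^5*n^1*y^2 + (1)*m^5*n^1*y^1 + (3)*m^4*n^2*y^2 + (-3)*m^4*n^2*y^1 + (-1)*m^4*y^2 + (1)*m^4*y^1 + (3)*m^3*n^5*y^1 + (-1)*m^3*n^1*y^3 + (3)*m^3*n^1*y^2 + (-3)*m^3*n^1*y^1 + (-1)*m^2*n^6*y^1 + (-3)*m^2*n^4*y^2 + (3)*m^2*n^4*y^1 + (-1)*m^2*y^3 + (3)*m^2*y^2 + (-3)*m^2*y^1 + (1)*m^1*n^5*y^2 + (-1)*m^1*n^5*y^1 + (1)*m^1*n^3*y^3 + (-3)*m^1*n^3*y^2 + (3)*m^1*n^3*y^1 + (1)*n^4*y^2 + (-1)*n^4*y^1 + (1)*n^2*y^3 + (-3)*n^2*y^2 + (3)*n^2*y^1)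 * hn
    · linear_combination ((-1)*m^2*y^2 + (1)*n^2*y^2) * hf + ((1)*m^6*n^2*y^2 + (-3)*m^5*n^3*y^2 + (-1)*m^5*n^1*y^3 + (1)*m^5*n^1*y^2 + (3)*m^4*n^2*y^3 + (-3)*m^4*n^2*y^2 + (-1)*m^4*y^3 + (1)*m^4*y^2 + (3)*m^3*n^5*y^2 + (-1)*m^3*n^1*y^4 + (3)*m^3*n^1*y^3 + (-3)*m^3*n^1*y^2 + (-1)*m^2*n^6*y^2 + (-3)*m^2*n^4*y^3 + (3)*m^2*n^4*y^2 + (-1)*m^2*y^4 + (3)*m^2*y^3 + (-3)*m^2*y^2 + (1)*m^1*n^5*y^3 + (-1)*m^1*n^5*y^2 + (1)*m^1*n^3*y^4 + (-3)*m^1*n^3*y^3 + (3)*m^1*n^3*y^2 + (1)*n^4*y^3 + (-1)*n^4*y^2 + (1)*n^2*y^4 + (-3)*n^2*y^3 + (3)*n^2*y^2) * hn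
    · linear_combination ((-1)*m^1*y^2 + (-1)*n^1*y^2) * hf + ((1)*m^5*n^2*y^2 + (-2)*m^4*n^3*y^2 + (-1)*m^4*n^1*y^3 + (1)*m^4*n^1*y^2 + (-2)*m^3*n^4*y^2 + (2)*m^3*n^2*y^3 + (-2)*m^3*n^2*y^2 + (-1)*m^3*y^3 + (1)*m^3*y^2 + (1)*m^2*n^5*y^2 + (2)*m^2*n^3*y^3 + (-2)*m^2*n^3*y^2 + (-1)*m^2*n^1*y^4 + (2)*m^2*n^1*y^3 + (-2)*m^2*n^1*y^2 + (-1)*m^1*n^4*y^3 + (1)*m^1*n^4*y^2 + (-1)*m^1*n^2*y^4 + (2)*m^1*n^2*y^3 + (-2)*m^1*n^2*y^2 + (-1)*m^1*y^4 + (3)*m^1*y^3 + (-3)*m^1*y^2 + (-1)*n^3*y^3 + (1)*n^3*y^2 + (-1)*n^1*y^4 + (3)*n^1*y^3 + (-3)*n^1*y^2) * hn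

theorem fig8_longitude_matrix
    (y m : ℂ) (hy : y ≠ 0) (hm : m ≠ 0)
    (hf : (y - 1) * (m ^ 2 + m⁻¹ ^ 2) + y ^ 2 - 3 * y + 3 = 0)
    (A B : Matrix (Fin 2) (Fin 2) ℂ)
    (hA : A = !![m, 1; 0, m⁻¹]) (hB : B = !![m, 0; y, m⁻¹])
    (C D L : Matrix (Fin 2) (Fin 2) ℂ)
    (hC : C = B * A * B⁻¹) (hD : D = C⁻¹ * B * C)
    (hL : L = B⁻¹ * A * C⁻¹ * D) :
    L 1 0 = 0 ∧
      L 0 0 = -m⁻¹ ^ 2 * (y - 3) * (y - 1) ^ 2 - m⁻¹ ^ 4 * (y ^ 2 - 3 * y + 1) ∧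
      L * A = A * L :=
  fig8_aux y m m⁻¹ (mul_inv_cancel₀ hm) hf A B hA hB C D L hC hD hL
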